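/- Let m ≥ n > 0 > k be integers, and let r(x,y) = (u₁(x)e^{2πimy}, u₂(x)e^{2πiny}, u₃(x)e^{2πiky}) with u₁(x) = sin(x)√(k/(k−m)), u₂(x) = cos(x)√(k/(k−n)), u₃(x) = √(n cos²x/(n−k) + m sin²x/(m−k)). Then for every (x,y) with r_x(x,y) ≠ 0 and r_y(x,y) ≠ 0, the determinant of the 3×3 complex matrix with rows r, r_x/|r_x|, r_y/|r_y| equals i·e^{2πi(m+n+k)y}. Consequently the Lagrangian angle of Σ_{m,n,k} satisfies e^{iβ} = i·e^{2πi(m+n+k)y}. -/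

import Mathlib

open Complex Real

/-- Partial derivative in the first variable. -/
noncomputable def pdx {E : Type*} [NormedAddCommGroup E] [NormedSpace ℝ E]
    (f : ℝ → ℝ → E) (x y : ℝ) : E := deriv (fun x' => f x' y) x

/-- Partial derivative in the second variable. -/
noncomputable def pdy {E : Type*} [NormedAddCommGroup E] [NormedSpace ℝ E]
    (f : ℝ → ℝ → E) (x y : ℝ) : E := deriv (fun y' => f x y') y

/-- Hermitian inner product ⟨a,b⟩ = ∑ aᵢ conj(bᵢ) on ℂ³. -/
noncomputable def herm (a b : Fin 3 → ℂ) : ℂ := ∑ i, a i * starRingEnd ℂ (b i)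

/-- Hermitian norm |a| = √⟨a,a⟩. -/
noncomputable def hnorm (a : Fin 3 → ℂ) : ℝ := Real.sqrt (herm a a).re

lemma hnorm_pos {v : Fin 3 → ℂ} (hv : v ≠ 0) : 0 < hnorm v := by
  have h : (herm v v).re = Complex.normSq (v 0) + Complex.normSq (v 1) + Complex.normSq (v 2) := by
    simp [herm, Fin.sum_univ_three, Complex.mul_conj]
  have hne : v 0 ≠ 0 ∨ v 1 ≠ 0 ∨ v 2 ≠ 0 := by
    by_contra hcon
    push_neg at hcon
    apply hv
    funext i
    fin_cases i <;> simp [hcon.1, hcon.2.1, hcon.2.2]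
  have hpos : 0 < (herm v v).re := by
    rw [h]
    rcases hne with h0 | h1 | h2
    · have := Complex.normSq_pos.mpr h0
      have := Complex.normSq_nonneg (v 1); have := Complex.normSq_nonneg (v 2); linarith
    · have := Complex.normSq_pos.mpr h1
      have := Complex.normSq_nonneg (v 0); have := Complex.normSq_nonneg (v 2); linarith
    · have := Complex.normSq_pos.mpr h2
      have := Complex.normSq_nonneg (v 0); have := Complex.normSq_nonneg (v 1); linarith
  exact Real.sqrt_pos.mpr hpos

lemma econj (a : ℝ) (z : ℂ) (hz : z = (a : ℂ) * Complex.I) :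
    Complex.exp z * (starRingEnd ℂ) (Complex.exp z) = 1 := by
  subst hz
  rw [← Complex.exp_conj, ← Complex.exp_add, map_mul, Complex.conj_ofReal, Complex.conj_I]
  rw [show (a:ℂ) * Complex.I + (a:ℂ) * (-Complex.I) = 0 by ring, Complex.exp_zero]

set_option maxHeartbeats 2000000 in
lemma key2 (mr nr kr s w a b c dl : ℝ)
    (hnk : nr - kr ≠ 0) (hmk : mr - kr ≠ 0)
    (hpy : s^2 + w^2 = 1)
    (ha : a = 1 - mr/(mr-kr)) (hb : b = 1 - nr/(nr-kr))
    (hc : c = (nr/(nr-kr))*w^2 + (mr/(mr-kr))*s^2)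
    (hdl : dl = mr/(mr-kr) - nr/(nr-kr)) :
    (w^2*a*c + s^2*b*c + s^2*w^2*dl^2) * (mr^2*s^2*a + nr^2*w^2*b + kr^2*c)
      = a*b*(s^2*c*(mr-kr) + s^2*w^2*dl*(mr-nr) + w^2*c*(nr-kr))^2 := by
  subst ha hb hc hdl
  have hw2 : w^2 = 1 - s^2 := by linarith
  rw [hw2]
  field_simp
  ring


set_option maxHeartbeats 4000000 in
/-- The Lagrangian angle of `Σ_{m,n,k}` satisfies `e^{iβ} = i·e^{2πi(m+n+k)y}`:
the determinant of the matrix with rows `r`, `r_x/|r_x|`, `r_y/|r_y|` equals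
`i·e^{2πi(m+n+k)y}`. -/
theorem mnk_lagrangian_angle
    (m n k : ℤ) (hmn : n ≤ m) (hn : 0 < n) (hk : k < 0)
    (u1 u2 u3 : ℝ → ℝ)
    (hu1 : ∀ x, u1 x = Real.sin x * Real.sqrt ((k : ℝ) / ((k : ℝ) - (m : ℝ))))
    (hu2 : ∀ x, u2 x = Real.cos x * Real.sqrt ((k : ℝ) / ((k : ℝ) - (n : ℝ))))
    (hu3 : ∀ x, u3 x = Real.sqrt ((n : ℝ) * (Real.cos x)^2 / ((n : ℝ) - (k : ℝ))
      + (m : ℝ) * (Real.sin x)^2 / ((m : ℝ) - (k : ℝ))))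
    (r : ℝ → ℝ → Fin 3 → ℂ)
    (hr : ∀ x y, r x y =
      ![(u1 x : ℂ) * Complex.exp (2 * Real.pi * (m : ℝ) * y * Complex.I),
        (u2 x : ℂ) * Complex.exp (2 * Real.pi * (n : ℝ) * y * Complex.I),
        (u3 x : ℂ) * Complex.exp (2 * Real.pi * (k : ℝ) * y * Complex.I)]) :
    ∀ x y, pdx r x y ≠ 0 → pdy r x y ≠ 0 →
      Matrix.det (Matrix.of ![r x y,
          ((hnorm (pdx r x y) : ℂ))⁻¹ • pdx r x y,
          ((hnorm (pdy r x y) : ℂ))⁻¹ • pdy r x y]) =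
        Complex.I * Complex.exp (2 * Real.pi * ((m : ℝ) + (n : ℝ) + (k : ℝ)) * y
          * Complex.I) := by
  intro x y hx hy
  -- numeric facts
  have hmR : (0:ℝ) < (m:ℝ) := by exact_mod_cast lt_of_lt_of_le hn hmn
  have hnR : (0:ℝ) < (n:ℝ) := by exact_mod_cast hn
  have hkR : (k:ℝ) < 0 := by exact_mod_cast hk
  have hkm : (k:ℝ) - (m:ℝ) < 0 := by linarith
  have hkn : (k:ℝ) - (n:ℝ) < 0 := by linarith
  have hmk : (0:ℝ) < (m:ℝ) - (k:ℝ) := by linarith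
  have hnk : (0:ℝ) < (n:ℝ) - (k:ℝ) := by linarith
  have hu1x := hu1 x
  have hu2x := hu2 x
  have hu3x := hu3 x
  set s := Real.sin x with hs
  set co := Real.cos x with hco
  have hpy : s^2 + co^2 = 1 := Real.sin_sq_add_cos_sq x
  set sa := Real.sqrt ((k : ℝ) / ((k : ℝ) - (m : ℝ))) with hsadef
  set sb := Real.sqrt ((k : ℝ) / ((k : ℝ) - (n : ℝ))) with hsbdef
  set cE := (n : ℝ) * co^2 / ((n : ℝ) - (k : ℝ)) + (m : ℝ) * s^2 / ((m : ℝ) - (k : ℝ)) with hcEdef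
  set g := Real.sqrt cE with hgdef
  have haq : 0 < (k:ℝ)/((k:ℝ)-(m:ℝ)) := div_pos_of_neg_of_neg hkR hkm
  have hbq : 0 < (k:ℝ)/((k:ℝ)-(n:ℝ)) := div_pos_of_neg_of_neg hkR hkn
  have hsa2 : sa^2 = (k:ℝ)/((k:ℝ)-(m:ℝ)) := Real.sq_sqrt haq.le
  have hsb2 : sb^2 = (k:ℝ)/((k:ℝ)-(n:ℝ)) := Real.sq_sqrt hbq.le
  have hsapos : 0 < sa := Real.sqrt_pos.mpr haq
  have hsbpos : 0 < sb := Real.sqrt_pos.mpr hbq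
  have hcEpos : 0 < cE := by
    have h1 : 0 < (n:ℝ)/((n:ℝ)-(k:ℝ)) := div_pos hnR hnk
    have h2 : 0 < (m:ℝ)/((m:ℝ)-(k:ℝ)) := div_pos hmR hmk
    have hcE' : cE = ((n:ℝ)/((n:ℝ)-(k:ℝ)))*co^2 + ((m:ℝ)/((m:ℝ)-(k:ℝ)))*s^2 := by
      rw [hcEdef]; ring
    rw [hcE']
    rcases le_or_gt (s^2) (co^2) with hle | hlt
    · have hco2 : (1:ℝ)/2 ≤ co^2 := by nlinarith
      nlinarith [mul_nonneg h2.le (sq_nonneg s)]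
    · have hs2 : (1:ℝ)/2 ≤ s^2 := by nlinarith
      nlinarith [mul_nonneg h1.le (sq_nonneg co)]
  have hg2 : g^2 = cE := Real.sq_sqrt hcEpos.le
  have hgpos : 0 < g := Real.sqrt_pos.mpr hcEpos
  have hgne : g ≠ 0 := ne_of_gt hgpos
  set dl := (m:ℝ)/((m:ℝ)-(k:ℝ)) - (n:ℝ)/((n:ℝ)-(k:ℝ)) with hdldef
  set d1 := co * sa with hd1def
  set d2 := -(s * sb) with hd2def
  set d3 := s * co * dl / g with hd3def
  -- derivatives of u
  have hu1' : HasDerivAt u1 d1 x := by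
    have hfun : u1 = fun t => Real.sin t * sa := funext hu1
    rw [hfun]
    exact (Real.hasDerivAt_sin x).mul_const sa
  have hu2' : HasDerivAt u2 d2 x := by
    have hfun : u2 = fun t => Real.cos t * sb := funext hu2
    rw [hfun]
    have h := (Real.hasDerivAt_cos x).mul_const sb
    have he : -Real.sin x * sb = d2 := by rw [hd2def, hs]; ring
    rwa [he] at h
  have hu3' : HasDerivAt u3 d3 x := by
    have hfun : u3 = fun t => Real.sqrt ((n : ℝ) * (Real.cos t)^2 / ((n : ℝ) - (k : ℝ))
        + (m : ℝ) * (Real.sin t)^2 / ((m : ℝ) - (k : ℝ))) := funext hu3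
    rw [hfun]
    have hcos2 : HasDerivAt (fun t => (Real.cos t)^2)
        ((2:ℝ) * Real.cos x ^ 1 * -Real.sin x) x := by
      simpa using (Real.hasDerivAt_cos x).fun_pow 2
    have hsin2 : HasDerivAt (fun t => (Real.sin t)^2)
        ((2:ℝ) * Real.sin x ^ 1 * Real.cos x) x := by
      simpa using (Real.hasDerivAt_sin x).fun_pow 2
    have hfc : HasDerivAt (fun t => (n : ℝ) * (Real.cos t)^2 / ((n : ℝ) - (k : ℝ))
        + (m : ℝ) * (Real.sin t)^2 / ((m : ℝ) - (k : ℝ)))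
        ((n:ℝ) * ((2:ℝ) * Real.cos x ^ 1 * -Real.sin x) / ((n:ℝ)-(k:ℝ))
          + (m:ℝ) * ((2:ℝ) * Real.sin x ^ 1 * Real.cos x) / ((m:ℝ)-(k:ℝ))) x :=
      ((hcos2.const_mul ((n:ℝ))).div_const ((n:ℝ)-(k:ℝ))).add
        ((hsin2.const_mul ((m:ℝ))).div_const ((m:ℝ)-(k:ℝ)))
    have hsq := (Real.hasDerivAt_sqrt (ne_of_gt hcEpos)).comp x hfc
    have he : 1 / (2 * Real.sqrt cE) * ((n:ℝ) * ((2:ℝ) * Real.cos x ^ 1 * -Real.sin x) / ((n:ℝ)-(k:ℝ))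
          + (m:ℝ) * ((2:ℝ) * Real.sin x ^ 1 * Real.cos x) / ((m:ℝ)-(k:ℝ))) = d3 := by
      rw [hd3def, hdldef, ← hgdef, ← hs, ← hco]
      field_simp
      ring
    rwa [he] at hsq
  
  set E1 := Complex.exp (2 * (Real.pi : ℂ) * ((m:ℝ) : ℂ) * (y : ℂ) * Complex.I) with hE1def
  set E2 := Complex.exp (2 * (Real.pi : ℂ) * ((n:ℝ) : ℂ) * (y : ℂ) * Complex.I) with hE2def
  set E3 := Complex.exp (2 * (Real.pi : ℂ) * ((k:ℝ) : ℂ) * (y : ℂ) * Complex.I) with hE3def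
  have hVx : pdx r x y = ![ (d1:ℂ)*E1, (d2:ℂ)*E2, (d3:ℂ)*E3 ] := by
    have hfun : (fun x' => r x' y) = fun x' =>
        ![ ((u1 x' : ℝ):ℂ)*E1, ((u2 x' : ℝ):ℂ)*E2, ((u3 x' : ℝ):ℂ)*E3 ] := by
      funext x'
      exact hr x' y
    rw [pdx, hfun]
    apply HasDerivAt.deriv
    apply hasDerivAt_pi.mpr
    intro i
    fin_cases i
    · simpa using (hu1'.ofReal_comp).mul_const E1
    · simpa using (hu2'.ofReal_comp).mul_const E2
    · simpa using (hu3'.ofReal_comp).mul_const E3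
  
  have hone : HasDerivAt (fun y' : ℝ => (y' : ℂ)) 1 y := by
    exact Complex.ofRealCLM.hasDerivAt
  have hVy : pdy r x y = ![ ((u1 x : ℝ):ℂ)*(E1*(2*(Real.pi:ℂ)*((m:ℝ):ℂ)*Complex.I)),
      ((u2 x : ℝ):ℂ)*(E2*(2*(Real.pi:ℂ)*((n:ℝ):ℂ)*Complex.I)),
      ((u3 x : ℝ):ℂ)*(E3*(2*(Real.pi:ℂ)*((k:ℝ):ℂ)*Complex.I)) ] := by
    have hfun : (fun y' => r x y') = fun y' : ℝ =>
        ![ ((u1 x : ℝ):ℂ) * Complex.exp (2 * (Real.pi : ℂ) * ((m:ℝ) : ℂ) * (y' : ℂ) * Complex.I),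
           ((u2 x : ℝ):ℂ) * Complex.exp (2 * (Real.pi : ℂ) * ((n:ℝ) : ℂ) * (y' : ℂ) * Complex.I),
           ((u3 x : ℝ):ℂ) * Complex.exp (2 * (Real.pi : ℂ) * ((k:ℝ) : ℂ) * (y' : ℂ) * Complex.I) ] := by
      funext y'
      exact hr x y'
    rw [pdy, hfun]
    apply HasDerivAt.deriv
    apply hasDerivAt_pi.mpr
    intro i
    have hinm : HasDerivAt (fun y' : ℝ => 2 * (Real.pi:ℂ) * ((m:ℝ):ℂ) * (y':ℂ) * Complex.I)
        (2*(Real.pi:ℂ)*((m:ℝ):ℂ)*Complex.I) y := by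
      simpa using (hone.const_mul (2 * (Real.pi:ℂ) * ((m:ℝ):ℂ))).mul_const Complex.I
    have hinn : HasDerivAt (fun y' : ℝ => 2 * (Real.pi:ℂ) * ((n:ℝ):ℂ) * (y':ℂ) * Complex.I)
        (2*(Real.pi:ℂ)*((n:ℝ):ℂ)*Complex.I) y := by
      simpa using (hone.const_mul (2 * (Real.pi:ℂ) * ((n:ℝ):ℂ))).mul_const Complex.I
    have hink : HasDerivAt (fun y' : ℝ => 2 * (Real.pi:ℂ) * ((k:ℝ):ℂ) * (y':ℂ) * Complex.I)
        (2*(Real.pi:ℂ)*((k:ℝ):ℂ)*Complex.I) y := by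
      simpa using (hone.const_mul (2 * (Real.pi:ℂ) * ((k:ℝ):ℂ))).mul_const Complex.I
    fin_cases i
    · simpa [hE1def] using hinm.cexp.const_mul ((u1 x : ℝ):ℂ)
    · simpa [hE2def] using hinn.cexp.const_mul ((u2 x : ℝ):ℂ)
    · simpa [hE3def] using hink.cexp.const_mul ((u3 x : ℝ):ℂ)
  
  have hE1c : E1 * (starRingEnd ℂ) E1 = 1 := by
    refine econj (2*Real.pi*(m:ℝ)*y) _ ?_
    push_cast; ring
  have hE2c : E2 * (starRingEnd ℂ) E2 = 1 := by
    refine econj (2*Real.pi*(n:ℝ)*y) _ ?_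
    push_cast; ring
  have hE3c : E3 * (starRingEnd ℂ) E3 = 1 := by
    refine econj (2*Real.pi*(k:ℝ)*y) _ ?_
    push_cast; ring
  set SX := d1^2 + d2^2 + d3^2 with hSXdef
  set S0 := (m:ℝ)^2*(u1 x)^2 + (n:ℝ)^2*(u2 x)^2 + (k:ℝ)^2*(u3 x)^2 with hS0def
  have hermx : herm (pdx r x y) (pdx r x y) = ((SX : ℝ) : ℂ) := by
    rw [hVx]
    simp only [herm, Fin.sum_univ_three, Matrix.cons_val_zero, Matrix.cons_val_one,
      Matrix.head_cons, Matrix.cons_val_two, Matrix.tail_cons, map_mul, Complex.conj_ofReal,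
      hSXdef]
    push_cast
    linear_combination (d1:ℂ)^2 * hE1c + (d2:ℂ)^2 * hE2c + (d3:ℂ)^2 * hE3c
  have hermy : herm (pdy r x y) (pdy r x y) = (((2*Real.pi)^2 * S0 : ℝ) : ℂ) := by
    rw [hVy]
    simp only [herm, Fin.sum_univ_three, Matrix.cons_val_zero, Matrix.cons_val_one,
      Matrix.head_cons, Matrix.cons_val_two, Matrix.tail_cons, map_mul, map_ofNat,
      Complex.conj_ofReal, Complex.conj_I, hS0def]
    push_cast
    linear_combination
      (-(((u1 x):ℂ)^2*(2*(Real.pi:ℂ)*(m:ℂ))^2)*Complex.I^2) * hE1c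
      + (-(((u2 x):ℂ)^2*(2*(Real.pi:ℂ)*(n:ℂ))^2)*Complex.I^2) * hE2c
      + (-(((u3 x):ℂ)^2*(2*(Real.pi:ℂ)*(k:ℂ))^2)*Complex.I^2) * hE3c
      + (-(((u1 x):ℂ)^2*(2*(Real.pi:ℂ)*(m:ℂ))^2)
         -(((u2 x):ℂ)^2*(2*(Real.pi:ℂ)*(n:ℂ))^2)
         -(((u3 x):ℂ)^2*(2*(Real.pi:ℂ)*(k:ℂ))^2)) * Complex.I_mul_I
  have hXv : hnorm (pdx r x y) = Real.sqrt SX := by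
    rw [hnorm, hermx, Complex.ofReal_re]
  have hYv : hnorm (pdy r x y) = Real.sqrt ((2*Real.pi)^2 * S0) := by
    rw [hnorm, hermy, Complex.ofReal_re]
  
  set QQ := s^2*cE*((m:ℝ)-(k:ℝ)) + s^2*co^2*dl*((m:ℝ)-(n:ℝ)) + co^2*cE*((n:ℝ)-(k:ℝ)) with hQQdef
  have KEY := key2 (m:ℝ) (n:ℝ) (k:ℝ) s co (sa^2) (sb^2) cE dl (ne_of_gt hnk) (ne_of_gt hmk)
    hpy
    (by rw [hsa2]; field_simp [ne_of_lt hkm]; ring)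
    (by rw [hsb2]; field_simp [ne_of_lt hkn]; ring)
    (by rw [hcEdef]; ring)
    hdldef
  set DR := u1 x * (d2 * ((k:ℝ) * u3 x) - d3 * ((n:ℝ) * u2 x))
      - u2 x * (d1 * ((k:ℝ) * u3 x) - d3 * ((m:ℝ) * u1 x))
      + u3 x * (d1 * ((n:ℝ) * u2 x) - d2 * ((m:ℝ) * u1 x)) with hDRdef
  have hDRg : DR * g = sa * sb * QQ := by
    rw [hDRdef, hQQdef, hu1x, hu2x, hu3x, hd1def, hd2def, hd3def,
      show cE = g^2 from hg2.symm]
    field_simp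
    ring
  have hQQ : QQ = (s^2+co^2)*((m:ℝ)*s^2+(n:ℝ)*co^2) := by
    rw [hQQdef, hcEdef, hdldef]
    field_simp
    ring
  have hQQnn : 0 ≤ QQ := by
    rw [hQQ, hpy, one_mul]
    have h1 := mul_nonneg hmR.le (sq_nonneg s)
    have h2 := mul_nonneg hnR.le (sq_nonneg co)
    linarith
  have hDRnn : 0 ≤ DR := by
    rcases lt_or_ge DR 0 with hneg | h
    · exfalso
      have hlt := mul_neg_of_neg_of_pos hneg hgpos
      have h0 : 0 ≤ sa * sb * QQ := mul_nonneg (mul_nonneg hsapos.le hsbpos.le) hQQnn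
      linarith [hDRg]
    · exact h
  have h1 : SX * S0 * cE = (sa*sb*QQ)^2 := by
    have e1 : SX * cE = co^2*sa^2*cE + s^2*sb^2*cE + s^2*co^2*dl^2 := by
      rw [hSXdef, hd1def, hd2def, hd3def, show cE = g^2 from hg2.symm]
      field_simp
    have e2 : S0 = (m:ℝ)^2*s^2*sa^2 + (n:ℝ)^2*co^2*sb^2 + (k:ℝ)^2*cE := by
      rw [hS0def, hu1x, hu2x, hu3x, show cE = g^2 from hg2.symm]; ring
    calc SX * S0 * cE = (co^2*(sa^2)*cE + s^2*(sb^2)*cE + s^2*co^2*dl^2) * S0 := by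
          rw [← e1]; ring
      _ = (co^2*(sa^2)*cE + s^2*(sb^2)*cE + s^2*co^2*dl^2)
          * ((m:ℝ)^2*s^2*(sa^2) + (n:ℝ)^2*co^2*(sb^2) + (k:ℝ)^2*cE) := by rw [← e2]
      _ = (sa^2)*(sb^2)*(s^2*cE*((m:ℝ)-(k:ℝ)) + s^2*co^2*dl*((m:ℝ)-(n:ℝ))
          + co^2*cE*((n:ℝ)-(k:ℝ)))^2 := KEY
      _ = (sa*sb*QQ)^2 := by rw [hQQdef]; ring
  have h3 : SX * S0 = DR^2 := by
    have h2 : (DR*g)^2 = (sa*sb*QQ)^2 := by rw [hDRg]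
    refine mul_right_cancel₀ (pow_ne_zero 2 hgne) ?_
    linear_combination h1 - h2 + (SX*S0)*hg2
  have hmain : SX * ((2*Real.pi)^2 * S0) = (2*Real.pi*DR)^2 := by
    linear_combination (2*Real.pi)^2 * h3
  have hSXnn : 0 ≤ SX := by rw [hSXdef]; positivity
  have hXY : Real.sqrt SX * Real.sqrt ((2*Real.pi)^2*S0) = 2*Real.pi*DR := by
    rw [← Real.sqrt_mul hSXnn, hmain,
      Real.sqrt_sq (mul_nonneg (by positivity) hDRnn)]
  
  have hS0nn : 0 ≤ S0 := by rw [hS0def]; positivity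
  have hsqS0 : Real.sqrt ((2*Real.pi)^2*S0) = 2*Real.pi*Real.sqrt S0 := by
    rw [Real.sqrt_mul (by positivity), Real.sqrt_sq (by positivity)]
  have hXpos : 0 < Real.sqrt SX := by rw [← hXv]; exact hnorm_pos hx
  have hYpos : 0 < Real.sqrt ((2*Real.pi)^2*S0) := by rw [← hYv]; exact hnorm_pos hy
  have hS0pos : 0 < Real.sqrt S0 := by
    rcases (Real.sqrt_nonneg S0).lt_or_eq with h | h
    · exact h
    · exfalso
      rw [hsqS0, ← h, mul_zero] at hYpos
      exact lt_irrefl 0 hYpos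
  have hXne : ((Real.sqrt SX : ℝ) : ℂ) ≠ 0 := Complex.ofReal_ne_zero.mpr (ne_of_gt hXpos)
  have hS0ne : ((Real.sqrt S0 : ℝ) : ℂ) ≠ 0 := Complex.ofReal_ne_zero.mpr (ne_of_gt hS0pos)
  have hpine : ((Real.pi : ℝ) : ℂ) ≠ 0 := Complex.ofReal_ne_zero.mpr Real.pi_ne_zero
  have hXYc : ((Real.sqrt SX : ℝ) : ℂ) * (2*(Real.pi:ℂ)*((Real.sqrt S0 : ℝ):ℂ))
      = 2*(Real.pi:ℂ)*((DR:ℝ):ℂ) := by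
    rw [hsqS0] at hXY
    have := congrArg (fun t : ℝ => (t : ℂ)) hXY
    push_cast at this ⊢
    linear_combination this
  have hDRc : ((DR:ℝ):ℂ) = ((u1 x:ℝ):ℂ) * (((d2:ℝ):ℂ) * ((k:ℂ) * ((u3 x:ℝ):ℂ))
        - ((d3:ℝ):ℂ) * ((n:ℂ) * ((u2 x:ℝ):ℂ)))
      - ((u2 x:ℝ):ℂ) * (((d1:ℝ):ℂ) * ((k:ℂ) * ((u3 x:ℝ):ℂ))
        - ((d3:ℝ):ℂ) * ((m:ℂ) * ((u1 x:ℝ):ℂ)))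
      + ((u3 x:ℝ):ℂ) * (((d1:ℝ):ℂ) * ((n:ℂ) * ((u2 x:ℝ):ℂ))
        - ((d2:ℝ):ℂ) * ((m:ℂ) * ((u1 x:ℝ):ℂ))) := by
    rw [hDRdef]; push_cast; ring
  have hEprod : Complex.exp (2 * (Real.pi:ℂ) * (((m:ℝ):ℂ)+((n:ℝ):ℂ)+((k:ℝ):ℂ)) * (y:ℂ) * Complex.I)
      = E1 * E2 * E3 := by
    rw [hE1def, hE2def, hE3def, ← Complex.exp_add, ← Complex.exp_add]
    congr 1
    push_cast
    ring
  rw [hXv, hYv, hVx, hVy, hr x y, hEprod, hsqS0]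
  simp only [Matrix.det_fin_three, Matrix.of_apply, Matrix.cons_val', Matrix.cons_val_zero,
    Matrix.cons_val_one, Matrix.head_cons, Matrix.cons_val_two, Matrix.tail_cons,
    Matrix.head_fin_const, Matrix.empty_val', Matrix.cons_val_fin_one, Pi.smul_apply,
    smul_eq_mul]
  rw [← hE1def, ← hE2def, ← hE3def]
  push_cast
  field_simp [hXne, hS0ne, hpine]
  have hXYc' : ((Real.sqrt SX : ℝ) : ℂ) * ((Real.sqrt S0 : ℝ) : ℂ) = ((DR:ℝ):ℂ) :=
    mul_left_cancel₀ (mul_ne_zero two_ne_zero hpine) (by linear_combination hXYc)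
  linear_combination (-(E1*E2*E3)) * hXYc' + (-(E1*E2*E3)) * hDRc
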